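/- Let T : X → Y be a Dunford-Pettis p-convergent operator that is not strictly singular. Then X contains an infinite dimensional closed subspace Z with the p-Dunford-Pettis relatively compact property, and T(Z) is an infinite dimensional closed subspace of Y with the p-Dunford-Pettis relatively compact property. -/

import Mathlib

open Filter Topology Set
open scoped ENNReal

noncomputable section

/-- A sequence in a normed space is weakly null. -/
def WeaklyNull {E : Type*} [NormedAddCommGroup E] [NormedSpace ℝ E] (x : ℕ → E) : Prop :=
  ∀ φ : E →L[ℝ] ℝ, Tendsto (fun n => φ (x n)) atTop (𝓝 0)

/-- A bounded set on which every weakly null sequence of functionals converges uniformly. -/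
def DunfordPettisSet {E : Type*} [NormedAddCommGroup E] [NormedSpace ℝ E] (K : Set E) : Prop :=
  Bornology.IsBounded K ∧ ∀ f : ℕ → (E →L[ℝ] ℝ), WeaklyNull f →
    ∀ ε > 0, ∃ N : ℕ, ∀ n ≥ N, ∀ x ∈ K, |f n x| < ε

/-- Weakly `p`-summable sequence; for `p = ∞` this means weakly null. -/
def WeaklyPSummable (p : ℝ≥0∞) {E : Type*} [NormedAddCommGroup E] [NormedSpace ℝ E]
    (x : ℕ → E) : Prop :=
  if p = ∞ then WeaklyNull x else ∀ φ : E →L[ℝ] ℝ, Memℓp (fun n => φ (x n)) p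

def NormNull {E : Type*} [NormedAddCommGroup E] (x : ℕ → E) : Prop :=
  Tendsto (fun n => ‖x n‖) atTop (𝓝 0)

def PRightNull (p : ℝ≥0∞) {E : Type*} [NormedAddCommGroup E] [NormedSpace ℝ E]
    (x : ℕ → E) : Prop :=
  WeaklyPSummable p x ∧ DunfordPettisSet (Set.range x)

def WeaklyPCauchy (p : ℝ≥0∞) {E : Type*} [NormedAddCommGroup E] [NormedSpace ℝ E]
    (x : ℕ → E) : Prop :=
  ∀ k l : ℕ → ℕ, StrictMono k → StrictMono l →
    WeaklyPSummable p (fun n => x (k n) - x (l n))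

def PRightCauchy (p : ℝ≥0∞) {E : Type*} [NormedAddCommGroup E] [NormedSpace ℝ E]
    (x : ℕ → E) : Prop :=
  WeaklyPCauchy p x ∧ DunfordPettisSet (Set.range x)

/-- `p`-Dunford-Pettis relatively compact property. -/
def HasDPrcP (p : ℝ≥0∞) (E : Type*) [NormedAddCommGroup E] [NormedSpace ℝ E] : Prop :=
  ∀ x : ℕ → E, PRightNull p x → NormNull x

/-- A (not necessarily linear) map is Dunford-Pettis `p`-convergent. -/
def DPpConvergent (p : ℝ≥0∞) {E F : Type*} [NormedAddCommGroup E] [NormedSpace ℝ E]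
    [NormedAddCommGroup F] (f : E → F) : Prop :=
  ∀ x : ℕ → E, PRightNull p x → NormNull (fun n => f (x n))

/-- A map is `p`-convergent. -/
def PConvergent (p : ℝ≥0∞) {E F : Type*} [NormedAddCommGroup E] [NormedSpace ℝ E]
    [NormedAddCommGroup F] (f : E → F) : Prop :=
  ∀ x : ℕ → E, WeaklyPSummable p x → NormNull (fun n => f (x n))

/-- The adjoint of a continuous linear operator between normed spaces. -/
def opAdjoint {E F : Type*} [NormedAddCommGroup E] [NormedSpace ℝ E]
    [NormedAddCommGroup F] [NormedSpace ℝ F] (T : E →L[ℝ] F) :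
    (F →L[ℝ] ℝ) →L[ℝ] (E →L[ℝ] ℝ) :=
  (ContinuousLinearMap.compL ℝ E F ℝ).flip T


/-- `T` is strictly singular: it is not bounded below (an isomorphism onto its range)
on any infinite-dimensional closed subspace. -/
def StrictlySingular {X Y : Type*} [NormedAddCommGroup X] [NormedSpace ℝ X]
    [NormedAddCommGroup Y] [NormedSpace ℝ Y] (T : X →L[ℝ] Y) : Prop :=
  ¬ ∃ Z : Submodule ℝ X, IsClosed (Z : Set X) ∧ ¬ FiniteDimensional ℝ Z ∧
      ∃ c > 0, ∀ z ∈ Z, c * ‖z‖ ≤ ‖T z‖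

lemma weaklyNull_comp {E F : Type*} [NormedAddCommGroup E] [NormedSpace ℝ E]
    [NormedAddCommGroup F] [NormedSpace ℝ F] (A : E →L[ℝ] F) {x : ℕ → E}
    (h : WeaklyNull x) : WeaklyNull (fun n => A (x n)) :=
  fun φ => h (φ.comp A)

lemma weaklyPSummable_comp (p : ℝ≥0∞) {E F : Type*} [NormedAddCommGroup E] [NormedSpace ℝ E]
    [NormedAddCommGroup F] [NormedSpace ℝ F] (A : E →L[ℝ] F) {x : ℕ → E}
    (h : WeaklyPSummable p x) : WeaklyPSummable p (fun n => A (x n)) := by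
  unfold WeaklyPSummable at h ⊢
  split_ifs at h ⊢ with hpi
  · exact weaklyNull_comp A h
  · exact fun φ => h (φ.comp A)

lemma opAdjoint_apply {E F : Type*} [NormedAddCommGroup E] [NormedSpace ℝ E]
    [NormedAddCommGroup F] [NormedSpace ℝ F] (A : E →L[ℝ] F) (f : F →L[ℝ] ℝ) :
    opAdjoint A f = f.comp A := rfl

lemma dunfordPettis_comp {E F : Type*} [NormedAddCommGroup E] [NormedSpace ℝ E]
    [NormedAddCommGroup F] [NormedSpace ℝ F] (A : E →L[ℝ] F) {x : ℕ → E}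
    (h : DunfordPettisSet (Set.range x)) :
    DunfordPettisSet (Set.range (fun n => A (x n))) := by
  obtain ⟨hb, hdp⟩ := h
  constructor
  · obtain ⟨C, hC⟩ := (isBounded_iff_forall_norm_le).1 hb
    refine (isBounded_iff_forall_norm_le).2 ⟨‖A‖ * C, ?_⟩
    rintro _ ⟨n, rfl⟩
    calc ‖A (x n)‖ ≤ ‖A‖ * ‖x n‖ := A.le_opNorm _
      _ ≤ ‖A‖ * C := by
          exact mul_le_mul_of_nonneg_left (hC _ ⟨n, rfl⟩) (norm_nonneg A)
  · intro f hf ε hε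
    have hg : WeaklyNull (fun n => (f n).comp A) := by
      intro ψ
      have := hf (ψ.comp (opAdjoint A))
      simpa [opAdjoint_apply] using this
    obtain ⟨N, hN⟩ := hdp (fun n => (f n).comp A) hg ε hε
    refine ⟨N, ?_⟩
    rintro n hn _ ⟨m, rfl⟩
    exact hN n hn (x m) ⟨m, rfl⟩

lemma pRightNull_comp (p : ℝ≥0∞) {E F : Type*} [NormedAddCommGroup E] [NormedSpace ℝ E]
    [NormedAddCommGroup F] [NormedSpace ℝ F] (A : E →L[ℝ] F) {x : ℕ → E}
    (h : PRightNull p x) : PRightNull p (fun n => A (x n)) :=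
  ⟨weaklyPSummable_comp p A h.1, dunfordPettis_comp A h.2⟩

set_option maxHeartbeats 1000000 in
theorem stmt9 {X Y : Type*} [NormedAddCommGroup X] [NormedSpace ℝ X] [CompleteSpace X]
    [NormedAddCommGroup Y] [NormedSpace ℝ Y] [CompleteSpace Y]
    (p : ℝ≥0∞) (hp : 1 ≤ p) (T : X →L[ℝ] Y)
    (hT : DPpConvergent p T) (hss : ¬ StrictlySingular T) :
    ∃ Z : Submodule ℝ X, IsClosed (Z : Set X) ∧ ¬ FiniteDimensional ℝ Z ∧ HasDPrcP p Z ∧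
      IsClosed ((Z.map T.toLinearMap : Submodule ℝ Y) : Set Y) ∧
      ¬ FiniteDimensional ℝ (Z.map T.toLinearMap) ∧ HasDPrcP p (Z.map T.toLinearMap) := by
  obtain ⟨Z, hZc, hZfd, c, hc, hbound⟩ := not_not.mp hss
  haveI : CompleteSpace Z := hZc.completeSpace_coe
  set W : Submodule ℝ Y := Z.map T.toLinearMap with hW
  -- the operator restricted to Z, as a map into Y
  set f₀ : Z →L[ℝ] Y := T.comp Z.subtypeL with hf₀
  have hf₀app : ∀ z : Z, f₀ z = T (z : X) := fun z => rfl
  have hlow : ∀ z : Z, c * ‖z‖ ≤ ‖f₀ z‖ := fun z => hbound (z : X) z.2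
  -- f₀ is antilipschitz
  have hanti : AntilipschitzWith (Real.toNNReal c⁻¹) f₀ := by
    apply ContinuousLinearMap.antilipschitz_of_bound
    intro z
    rw [Real.coe_toNNReal _ (le_of_lt (inv_pos.mpr hc))]
    rw [le_inv_mul_iff₀ hc]
    exact hlow z
  have hrange_eq : Set.range f₀ = (W : Set Y) := by
    ext y
    constructor
    · rintro ⟨z, rfl⟩
      exact ⟨(z : X), z.2, rfl⟩
    · rintro ⟨xx, hxx, rfl⟩
      exact ⟨⟨xx, hxx⟩, rfl⟩
  have hWc : IsClosed (W : Set Y) := by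
    rw [← hrange_eq]
    exact hanti.isClosed_range f₀.uniformContinuous
  haveI : CompleteSpace W := hWc.completeSpace_coe
  -- corestriction to W
  have hmem : ∀ z : Z, f₀ z ∈ W := fun z => ⟨(z : X), z.2, rfl⟩
  set Tz : Z →L[ℝ] W := f₀.codRestrict W hmem with hTz
  have hTzapp : ∀ z : Z, (Tz z : Y) = f₀ z := fun z => rfl
  have hker : LinearMap.ker (Tz : Z →ₗ[ℝ] W) = ⊥ := by
    rw [LinearMap.ker_eq_bot']
    intro z hz
    have h0 : ‖f₀ z‖ = 0 := by
      have : (Tz z : Y) = 0 := by rw [show Tz z = 0 from hz]; rfl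
      rw [← hTzapp z, this, norm_zero]
    have := hlow z
    rw [h0] at this
    have hz0 : ‖z‖ ≤ 0 := by
      nlinarith [norm_nonneg z]
    exact norm_le_zero_iff.mp hz0
  have hsurj : LinearMap.range (Tz : Z →ₗ[ℝ] W) = ⊤ := by
    rw [LinearMap.range_eq_top]
    rintro ⟨y, xx, hxx, rfl⟩
    exact ⟨⟨xx, hxx⟩, rfl⟩
  set e : Z ≃L[ℝ] W := ContinuousLinearEquiv.ofBijective Tz hker hsurj with he
  have heapp : ∀ z : Z, e z = Tz z := fun z => rfl
  -- inverse map from W into X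
  set S : W →L[ℝ] X := Z.subtypeL.comp (e.symm : W →L[ℝ] Z) with hS
  have hTS : ∀ w : W, T (S w) = (w : Y) := by
    intro w
    have : Tz (e.symm w) = w := by
      rw [← heapp]
      exact e.apply_symm_apply w
    calc T (S w) = f₀ (e.symm w) := rfl
      _ = (Tz (e.symm w) : Y) := rfl
      _ = (w : Y) := by rw [this]
  refine ⟨Z, hZc, hZfd, ?_, hWc, ?_, ?_⟩
  · -- Z has the p-(DPrcP)
    intro x hx
    have hx' : PRightNull p (fun n => Z.subtypeL (x n)) := pRightNull_comp p Z.subtypeL hx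
    have hTnull := hT _ hx'
    have hbd : ∀ n, ‖x n‖ ≤ c⁻¹ * ‖T ((x n : X))‖ := by
      intro n
      rw [le_inv_mul_iff₀ hc]
      exact hbound (x n : X) (x n).2
    have : Tendsto (fun n => c⁻¹ * ‖T ((x n : X))‖) atTop (𝓝 0) := by
      simpa using hTnull.const_mul c⁻¹
    exact squeeze_zero (fun n => norm_nonneg _) hbd this
  · -- W is infinite dimensional
    intro hWfd
    exact hZfd (Module.Finite.equiv e.symm.toLinearEquiv)
  · -- W has the p-(DPrcP)
    intro y hy
    have hy' : PRightNull p (fun n => S (y n)) := pRightNull_comp p S hy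
    have hTnull := hT _ hy'
    have : Tendsto (fun n => ‖(y n : Y)‖) atTop (𝓝 0) := by
      have heq : (fun n => ‖T (S (y n))‖) = fun n => ‖(y n : Y)‖ := by
        funext n; rw [hTS]
      have hTnull' : Tendsto (fun n => ‖T (S (y n))‖) atTop (𝓝 0) := hTnull
      rwa [heq] at hTnull'
    exact this
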